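/- Let F, g_1, …, g_m : ℝⁿ → ℝ be convex and differentiable, let t > 0, and suppose x̄ ∈ ℝⁿ satisfies g_i(x̄) < 0 for all i and the barrier stationarity condition t ∇F(x̄) + Σ_{i=1}^m (−1/g_i(x̄)) ∇g_i(x̄) = 0. Then for every x ∈ ℝⁿ with g_i(x) ≤ 0 for all i, one has F(x̄) ≤ F(x) + m/t; i.e., the central-path point x̄ is at most m/t-suboptimal for the inequality-constrained problem of minimizing F subject to g_i(x) ≤ 0, i = 1,…,m. -/

import Mathlib

open scoped BigOperators

lemma convex_grad_ineq {n : ℕ} (f : EuclideanSpace ℝ (Fin n) → ℝ)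
    (hf : ConvexOn ℝ Set.univ f) (hfd : Differentiable ℝ f)
    (x y : EuclideanSpace ℝ (Fin n)) :
    f x + inner ℝ (gradient f x) (y - x) ≤ f y := by
  set φ : ℝ → ℝ := fun s => f (x + s • (y - x)) with hφ
  have hconv : ConvexOn ℝ Set.univ φ := by
    have h := hf.comp_affineMap (AffineMap.lineMap x y)
    have : (⇑(AffineMap.lineMap x y) ⁻¹' Set.univ : Set ℝ) = Set.univ := by simp
    rw [this] at h
    suffices hfun : φ = f ∘ ⇑(AffineMap.lineMap x y) by rw [hfun]; exact h
    funext s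
    simp [φ, AffineMap.lineMap_apply_module', add_comm]
  have hline : HasDerivAt (fun s : ℝ => x + s • (y - x)) (y - x) 0 := by
    simpa using ((hasDerivAt_id (0:ℝ)).smul_const (y - x)).const_add x
  have hderiv : HasDerivAt φ (inner ℝ (gradient f x) (y - x)) 0 := by
    have h1 := (hfd (x + (0:ℝ) • (y - x))).hasFDerivAt.comp_hasDerivAt 0 hline
    simp only [zero_smul, add_zero] at h1
    have h2 : fderiv ℝ f x (y - x) = inner ℝ (gradient f x) (y - x) := by
      have := ((hfd x).hasGradientAt).hasFDerivAt.fderiv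
      rw [this]
      simp
    rwa [h2] at h1
  have := hconv.le_slope_of_hasDerivAt (Set.mem_univ 0) (Set.mem_univ 1) one_pos hderiv
  rw [slope_def_field] at this
  simp only [φ, one_smul, zero_smul, add_zero, sub_zero, div_one] at this
  have hxy : x + (y - x) = y := by abel
  rw [hxy] at this
  linarith

/-- Suboptimality of central-path points: if `x̄` is strictly feasible and satisfies the
barrier stationarity condition `t∇F(x̄) + Σᵢ (−1/gᵢ(x̄))∇gᵢ(x̄) = 0` with `t > 0`, then
`F(x̄) ≤ F(x) + m/t` for every feasible `x` (i.e. `x̄` is at most `m/t`-suboptimal for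
minimizing `F` subject to `gᵢ(x) ≤ 0`). -/
theorem central_path_suboptimality (n m : ℕ)
    (F : EuclideanSpace ℝ (Fin n) → ℝ)
    (g : Fin m → EuclideanSpace ℝ (Fin n) → ℝ)
    (hF : ConvexOn ℝ Set.univ F) (hFd : Differentiable ℝ F)
    (hg : ∀ i, ConvexOn ℝ Set.univ (g i)) (hgd : ∀ i, Differentiable ℝ (g i))
    (t : ℝ) (ht : 0 < t) (xbar : EuclideanSpace ℝ (Fin n))
    (hfeas : ∀ i, g i xbar < 0)
    (hstat : t • gradient F xbar +
      ∑ i : Fin m, (-(1 / g i xbar)) • gradient (g i) xbar = 0) :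
    ∀ x : EuclideanSpace ℝ (Fin n), (∀ i, g i x ≤ 0) → F xbar ≤ F x + (m : ℝ) / t := by
  intro x hx
  set v := x - xbar with hv
  have key : t * inner ℝ (gradient F xbar) v
      + ∑ i, (-(1 / g i xbar)) * inner ℝ (gradient (g i) xbar) v = 0 := by
    have h0 : (inner ℝ (t • gradient F xbar +
        ∑ i : Fin m, (-(1 / g i xbar)) • gradient (g i) xbar) v : ℝ) = 0 := by
      rw [hstat, inner_zero_left]
    rw [inner_add_left, sum_inner] at h0
    simp only [real_inner_smul_left] at h0
    exact h0
  have hFiq : inner ℝ (gradient F xbar) v ≤ F x - F xbar := by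
    have := convex_grad_ineq F hF hFd xbar x
    rw [← hv] at this; linarith
  have hgiq : ∀ i, (inner ℝ (gradient (g i) xbar) v : ℝ) ≤ g i x - g i xbar := by
    intro i
    have := convex_grad_ineq (g i) (hg i) (hgd i) xbar x
    rw [← hv] at this; linarith
  have hsum : ∑ i, (-(1 / g i xbar)) * inner ℝ (gradient (g i) xbar) v ≤ (m : ℝ) := by
    calc ∑ i, (-(1 / g i xbar)) * inner ℝ (gradient (g i) xbar) v
        ≤ ∑ i, (-(1 / g i xbar)) * (g i x - g i xbar) := by
          apply Finset.sum_le_sum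
          intro i _
          refine mul_le_mul_of_nonneg_left (hgiq i) ?_
          have h1 : 1 / g i xbar < 0 := div_neg_of_pos_of_neg one_pos (hfeas i)
          linarith
      _ ≤ ∑ i : Fin m, (1 : ℝ) := by
          apply Finset.sum_le_sum
          intro i _
          have hgi := (hfeas i).ne
          have heq : (-(1 / g i xbar)) * (g i x - g i xbar)
              = (-(1 / g i xbar)) * g i x + 1 := by
            field_simp
            ring
          rw [heq]
          have hpos : (0:ℝ) ≤ -(1 / g i xbar) := by
            have h1 : 1 / g i xbar < 0 := div_neg_of_pos_of_neg one_pos (hfeas i)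
            linarith
          have := mul_nonpos_of_nonneg_of_nonpos hpos (hx i)
          linarith
      _ = (m : ℝ) := by simp
  have htF : -(m : ℝ) ≤ t * inner ℝ (gradient F xbar) v := by linarith
  have h2 : -(m : ℝ) ≤ t * (F x - F xbar) := by
    have := mul_le_mul_of_nonneg_left hFiq ht.le
    linarith
  have h3 : F xbar - F x ≤ (m : ℝ) / t := by
    rw [le_div_iff₀ ht]
    nlinarith
  linarith
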